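/- arXiv:1505.05437 — 5 statements merged into one kernel-verified Lean document; each statement's English description precedes it below -/
import Mathlib

section
/- Let p be a polynomial in d complex variables with no zeros in the open unit polydisk 𝔻^d, such that |p(z)| = 1 for every z in the d-torus 𝕋^d. Then p(z) = c·z^m for some multi-index m = (m_1,...,m_d) of nonnegative integers and a constant c of modulus 1. -/
open MvPolynomial


/-- A polynomial in `d` complex variables vanishing on the torus is zero. -/
lemma vanish_on_torus_eq_zero : ∀ (d : ℕ) (q : MvPolynomial (Fin d) ℂ),
    (∀ z : Fin d → ℂ, (∀ i, ‖z i‖ = 1) → eval z q = 0) → q = 0 := by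
  have hcirc : {t : ℂ | ‖t‖ = 1}.Infinite := by
    apply Set.infinite_of_injOn_mapsTo (f := fun x : ℝ => Complex.mk x (Real.sqrt (1 - x ^ 2)))
      (s := Set.Icc (0:ℝ) 1)
    · intro x hx y hy hxy
      exact congrArg Complex.re hxy
    · intro x hx
      simp only [Set.mem_setOf_eq]
      have hx2 : (0:ℝ) ≤ 1 - x ^ 2 := by nlinarith [hx.1, hx.2]
      rw [Complex.norm_def, Complex.normSq_mk]
      rw [show x * x + Real.sqrt (1 - x ^ 2) * Real.sqrt (1 - x ^ 2) = 1 by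
        rw [Real.mul_self_sqrt hx2]; ring]
      exact Real.sqrt_one
    · exact Set.Icc_infinite (show (0:ℝ) < 1 by norm_num)
  intro d
  induction d with
  | zero =>
    intro q hq
    obtain ⟨c, rfl⟩ := MvPolynomial.C_surjective (Fin 0) q
    have := hq (fun i => i.elim0) (fun i => i.elim0)
    simpa using this
  | succ n ih =>
    intro q hq
    have hF : finSuccEquiv ℂ n q = 0 := by
      refine Polynomial.ext fun k => ?_
      rw [Polynomial.coeff_zero]
      apply ih
      intro w hw
      have hG : (Polynomial.map (eval w) (finSuccEquiv ℂ n q)) = 0 := by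
        apply Polynomial.eq_zero_of_infinite_isRoot
        apply hcirc.mono
        intro t ht
        simp only [Set.mem_setOf_eq, Polynomial.IsRoot.def]
        rw [← eval_eq_eval_mv_eval']
        apply hq
        intro i
        refine Fin.cases ?_ ?_ i
        · simpa using ht
        · intro j; simpa using hw j
      have := congrArg (fun Q => Polynomial.coeff Q k) hG
      simpa [Polynomial.coeff_map] using this
    have := congrArg (finSuccEquiv ℂ n).symm hF
    simpa using this


lemma coeff_mul_of_unique {d : ℕ} {p q : MvPolynomial (Fin d) ℂ} {a b : Fin d →₀ ℕ}
    (h : ∀ x ∈ p.support, ∀ y ∈ q.support, x + y = a + b → x = a ∧ y = b) :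
    coeff (a + b) (p * q) = coeff a p * coeff b q := by
  classical
  rw [MvPolynomial.coeff_mul]
  apply Finset.sum_eq_single_of_mem (a, b)
  · rw [Finset.HasAntidiagonal.mem_antidiagonal]
  · rintro ⟨x, y⟩ hxy hne
    rw [Finset.HasAntidiagonal.mem_antidiagonal] at hxy
    by_contra hc
    have hx : x ∈ p.support := by
      rw [mem_support_iff]; intro h0; exact hc (by simp [h0])
    have hy : y ∈ q.support := by
      rw [mem_support_iff]; intro h0; exact hc (by simp [h0])
    obtain ⟨rfl, rfl⟩ := h x hx y hy hxy
    exact hne rfl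

lemma factor_of_monomial {d : ℕ} {p q : MvPolynomial (Fin d) ℂ} {M : Fin d →₀ ℕ} {e : ℂ}
    (he : e ≠ 0) (h : p * q = monomial M e) :
    ∃ (a : Fin d →₀ ℕ) (c : ℂ), p = monomial a c := by
  classical
  have hmne : (monomial M e : MvPolynomial (Fin d) ℂ) ≠ 0 := by
    intro h0
    have := congrArg (coeff M) h0
    simp [coeff_monomial] at this
    exact he this
  have hp : p ≠ 0 := by rintro rfl; rw [zero_mul] at h; exact hmne h.symm
  have hq : q ≠ 0 := by rintro rfl; rw [mul_zero] at h; exact hmne h.symm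
  have hps : p.support.Nonempty := Finset.nonempty_iff_ne_empty.2 (fun h0 => hp (support_eq_empty.mp h0))
  have hqs : q.support.Nonempty := Finset.nonempty_iff_ne_empty.2 (fun h0 => hq (support_eq_empty.mp h0))
  obtain ⟨A, hA, hAmax⟩ := Finset.exists_max_image p.support (fun x => toLex x) hps
  obtain ⟨A', hA', hAmin⟩ := Finset.exists_min_image p.support (fun x => toLex x) hps
  obtain ⟨B, hB, hBmax⟩ := Finset.exists_max_image q.support (fun x => toLex x) hqs
  obtain ⟨B', hB', hBmin⟩ := Finset.exists_min_image q.support (fun x => toLex x) hqs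
  have hsupp : (p * q).support = {M} := by rw [h, support_monomial, if_neg he]
  -- max
  have keymax : A + B ∈ (p * q).support := by
    rw [mem_support_iff, coeff_mul_of_unique]
    · exact mul_ne_zero (mem_support_iff.mp hA) (mem_support_iff.mp hB)
    · intro x hx y hy hxy
      have hxA : toLex x ≤ toLex A := hAmax x hx
      have hyB : toLex y ≤ toLex B := hBmax y hy
      have hsum : toLex x + toLex y = toLex A + toLex B := congrArg toLex hxy
      have hx' : toLex x = toLex A := by
        by_contra hne
        exact absurd hsum (ne_of_lt (add_lt_add_of_lt_of_le (lt_of_le_of_ne hxA hne) hyB))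
      have hxa : x = A := toLex.injective hx'
      subst hxa
      exact ⟨rfl, add_left_cancel hxy⟩
  have keymin : A' + B' ∈ (p * q).support := by
    rw [mem_support_iff, coeff_mul_of_unique]
    · exact mul_ne_zero (mem_support_iff.mp hA') (mem_support_iff.mp hB')
    · intro x hx y hy hxy
      have hxA : toLex A' ≤ toLex x := hAmin x hx
      have hyB : toLex B' ≤ toLex y := hBmin y hy
      have hsum : toLex x + toLex y = toLex A' + toLex B' := congrArg toLex hxy
      have hx' : toLex x = toLex A' := by
        by_contra hne
        exact absurd hsum (ne_of_gt (add_lt_add_of_lt_of_le (lt_of_le_of_ne hxA (Ne.symm hne)) hyB))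
      have hxa : x = A' := toLex.injective hx'
      subst hxa
      exact ⟨rfl, add_left_cancel hxy⟩
  rw [hsupp, Finset.mem_singleton] at keymax keymin
  have hAA : toLex A' = toLex A := by
    have hsum : toLex A' + toLex B' = toLex A + toLex B :=
      congrArg toLex (keymin.trans keymax.symm)
    by_contra hne
    exact absurd hsum (ne_of_lt (add_lt_add_of_lt_of_le
      (lt_of_le_of_ne (hAmin A hA) hne) (hBmin B hB)))
  refine ⟨A, coeff A p, ?_⟩
  ext m
  rw [coeff_monomial]
  split_ifs with hm
  · rw [hm]
  · rw [← notMem_support_iff]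
    intro hmem
    exact hm (toLex.injective (le_antisymm (hAA ▸ hAmin m hmem) (hAmax m hmem)))

/-- A polynomial in `d` variables with no zeros in the open unit polydisk and unimodular
values on the `d`-torus is a unimodular constant times a monomial. -/
theorem polydisk_stable_unimodular_is_monomial (d : ℕ) (p : MvPolynomial (Fin d) ℂ)
    (hstable : ∀ z : Fin d → ℂ, (∀ i, ‖z i‖ < 1) → eval z p ≠ 0)
    (hmod : ∀ z : Fin d → ℂ, (∀ i, ‖z i‖ = 1) → ‖eval z p‖ = 1) :
    ∃ (m : Fin d → ℕ) (c : ℂ), ‖c‖ = 1 ∧ p = C c * ∏ i, X i ^ m i := by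
  classical
  set M : Fin d →₀ ℕ := p.support.sup id with hMdef
  have hMle : ∀ k ∈ p.support, k ≤ M := fun k hk => Finset.le_sup (f := id) hk
  set ps : MvPolynomial (Fin d) ℂ :=
    ∑ k ∈ p.support, monomial (M - k) ((starRingEnd ℂ) (coeff k p)) with hpsdef
  have hkey : p * ps = monomial M 1 := by
    have hvan := vanish_on_torus_eq_zero d (p * ps - monomial M 1) ?_
    · linear_combination hvan
    intro z hz
    set P : (Fin d →₀ ℕ) → ℂ := fun k => ∏ i, z i ^ k i with hPdef
    have hPabs : ∀ k, ‖P k‖ = 1 := by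
      intro k
      rw [hPdef]
      simp only [norm_prod, norm_pow]
      rw [Finset.prod_eq_one]
      intro i _
      rw [hz i, one_pow]
    have hPne : ∀ k, P k ≠ 0 := fun k h0 => by
      have := hPabs k; rw [h0] at this; simp at this
    have hPconj : ∀ k, (starRingEnd ℂ) (P k) = (P k)⁻¹ := by
      intro k
      apply eq_inv_of_mul_eq_one_left
      rw [mul_comm, Complex.mul_conj]
      norm_cast
      rw [← Complex.sq_norm, hPabs, one_pow]
    have hPmul : ∀ k ∈ p.support, P (M - k) * P k = P M := by
      intro k hk
      rw [hPdef]
      simp only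
      rw [← Finset.prod_mul_distrib]
      apply Finset.prod_congr rfl
      intro i _
      rw [← pow_add]
      congr 1
      have hki : k i ≤ M i := (hMle k hk) i
      rw [Finsupp.tsub_apply]
      omega
    have hevp : eval z p = ∑ k ∈ p.support, coeff k p * P k := eval_eq' z p
    have hevps : eval z ps = P M * (starRingEnd ℂ) (eval z p) := by
      rw [hpsdef, map_sum, hevp, map_sum, Finset.mul_sum]
      apply Finset.sum_congr rfl
      intro k hk
      rw [eval_monomial, Finsupp.prod_fintype _ _ (fun i => pow_zero _)]
      have hMk : P (M - k) = P M * (P k)⁻¹ := by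
        rw [eq_mul_inv_iff_mul_eq₀ (hPne k)]
        exact hPmul k hk
      rw [show (∏ i, z i ^ (M - k) i) = P (M - k) from rfl, hMk, map_mul, hPconj]
      ring
    have h1 : eval z p * (starRingEnd ℂ) (eval z p) = 1 := by
      rw [Complex.mul_conj]
      norm_cast
      rw [← Complex.sq_norm, hmod z hz, one_pow]
    have hevm : eval z (monomial M (1 : ℂ)) = P M := by
      rw [eval_monomial, Finsupp.prod_fintype _ _ (fun i => pow_zero _), one_mul]
    rw [map_sub, map_mul, hevps, hevm]
    linear_combination P M * h1
  obtain ⟨a, c, hpc⟩ := factor_of_monomial one_ne_zero hkey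
  have hcabs : ‖c‖ = 1 := by
    have h1 := hmod (fun _ => 1) (fun i => by simp)
    rw [hpc, eval_monomial] at h1
    simpa [Finsupp.prod] using h1
  refine ⟨fun i => a i, c, hcabs, ?_⟩
  rw [hpc, monomial_eq]
  congr 1
  rw [Finsupp.prod_fintype _ _ (fun i => pow_zero _)]
end

section
/- Let p be a polynomial in the entries of a k-tuple of square matrix variables Z = (Z^{(1)},...,Z^{(k)}), with Z^{(r)} of size ℓ_r × ℓ_r, having no zeros on the polyball 𝓑 = {Z : ‖Z^{(r)}‖ < 1 for all r}, and suppose |p(Z)| = 1 whenever every Z^{(r)} is unitary. Then p(Z) = c·∏_{r=1}^k (det Z^{(r)})^{m_r} for some nonnegative integers m_r and constant c with |c| = 1. -/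
set_option maxHeartbeats 1000000
set_option synthInstance.maxHeartbeats 400000

open MvPolynomial
open scoped ComplexOrder

lemma circle_infinite : {z : ℂ | ‖z‖ = 1}.Infinite := by
  have h : Set.InjOn (fun t : ℝ => Complex.exp (t * Complex.I)) (Set.Ioo 0 1) := by
    intro a ha b hb hab
    simp only [Complex.exp_eq_exp_iff_exists_int] at hab
    obtain ⟨n, hn⟩ := hab
    have h2 : ((a : ℂ)) * Complex.I = ((b + n * (2 * Real.pi) : ℝ) : ℂ) * Complex.I := by
      rw [hn]; push_cast; ring
    have h3 : (a : ℝ) = b + n * (2 * Real.pi) := by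
      exact_mod_cast Complex.ofReal_injective (mul_right_cancel₀ Complex.I_ne_zero h2)
    have hπ : (2 : ℝ) * Real.pi > 1 := by nlinarith [Real.pi_gt_three]
    have hn0 : n = 0 := by
      rcases lt_trichotomy n 0 with h | h | h
      · have hn1 : n ≤ -1 := by omega
        have : (n : ℝ) ≤ -1 := by exact_mod_cast hn1
        nlinarith [ha.1, ha.2, hb.1, hb.2]
      · exact h
      · have : (1 : ℝ) ≤ n := by exact_mod_cast h
        nlinarith [ha.1, ha.2, hb.1, hb.2]
    rw [hn0] at h3; push_cast at h3; linarith
  have := (Set.Ioo_infinite (by norm_num : (0:ℝ) < 1)).image h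
  refine this.mono ?_
  rintro z ⟨t, _, rfl⟩
  simp [Complex.norm_exp]

lemma poly_zero_of_circle (g : Polynomial ℂ)
    (h : ∀ z : ℂ, ‖z‖ = 1 → g.eval z = 0) : g = 0 :=
  g.eq_zero_of_infinite_isRoot (circle_infinite.mono fun z hz => h z hz)

/-- An `MvPolynomial` over `ℂ` vanishing on the torus is zero. -/
lemma torus_fin : ∀ (n : ℕ) (q : MvPolynomial (Fin n) ℂ),
    (∀ x : Fin n → ℂ, (∀ i, ‖x i‖ = 1) → eval x q = 0) → q = 0 := by
  intro n
  induction n with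
  | zero =>
    intro q h
    obtain ⟨a, rfl⟩ := MvPolynomial.C_surjective (Fin 0) q
    have h1 := h (fun i => i.elim0) (fun i => i.elim0)
    rw [eval_C] at h1
    rw [h1, map_zero]
  | succ n ih =>
    intro q h
    have key : ∀ s : Fin n → ℂ, (∀ i, ‖s i‖ = 1) →
        Polynomial.map (eval s) (finSuccEquiv ℂ n q) = 0 := by
      intro s hs
      apply poly_zero_of_circle
      intro z hz
      rw [← eval_eq_eval_mv_eval']
      apply h
      intro i
      refine Fin.cases ?_ ?_ i <;> simp [hz, hs]
    have hcoeff : ∀ i, (finSuccEquiv ℂ n q).coeff i = 0 := by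
      intro i
      apply ih
      intro s hs
      have := key s hs
      have := congrArg (fun g => Polynomial.coeff g i) this
      simpa using this
    have : finSuccEquiv ℂ n q = 0 := Polynomial.ext fun i => by rw [hcoeff]; simp
    have := congrArg (finSuccEquiv ℂ n).symm this
    simpa using this

lemma torus_zero {σ : Type*} [Fintype σ] (q : MvPolynomial σ ℂ)
    (h : ∀ x : σ → ℂ, (∀ i, ‖x i‖ = 1) → eval x q = 0) : q = 0 := by
  classical
  let e := Fintype.equivFin σ
  have : rename e q = 0 := by
    apply torus_fin
    intro x hx
    rw [eval_rename]
    exact h _ fun i => hx (e i)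
  have := congrArg (rename e.symm) this
  rwa [rename_rename, Equiv.symm_comp_self, rename_id, map_zero] at this

lemma eval_eval₂C {σ τ : Type*} (g : σ → MvPolynomial τ ℂ) (x : τ → ℂ)
    (q : MvPolynomial σ ℂ) :
    eval x (eval₂ C g q) = eval (fun v => eval x (g v)) q := by
  rw [show (eval x (eval₂ C g q)) = (eval x : MvPolynomial τ ℂ →+* ℂ) (eval₂ C g q) from rfl,
    eval₂_comp_left]
  rw [← eval₂_id]
  congr 1
  ext a
  simp

open scoped MatrixOrder in
lemma exists_udw {n : Type*} [Fintype n] [DecidableEq n] (Z : Matrix n n ℂ)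
    (hZ : IsUnit Z.det) :
    ∃ V W : Matrix n n ℂ, V ∈ Matrix.unitaryGroup n ℂ ∧ W ∈ Matrix.unitaryGroup n ℂ ∧
      ∃ d : n → ℂ, Z = V * Matrix.diagonal d * W := by
  have hH : (Z.conjTranspose * Z).PosSemidef := Matrix.posSemidef_conjTranspose_mul_self Z
  set P := CFC.sqrt (Z.conjTranspose * Z) with hPdef
  have hPsd : P.PosSemidef := Matrix.nonneg_iff_posSemidef.mp (CFC.sqrt_nonneg _)
  have hPH : P.conjTranspose = P := hPsd.1
  have hP2 : P * P = Z.conjTranspose * Z :=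
    CFC.sqrt_mul_sqrt_self _ (Matrix.nonneg_iff_posSemidef.mpr hH)
  have hdet : IsUnit P.det := by
    have h1 : P.det * P.det = (Z.conjTranspose * Z).det := by rw [← Matrix.det_mul, hP2]
    have h2 : IsUnit (P.det * P.det) := by
      rw [h1, Matrix.det_mul, Matrix.det_conjTranspose]
      exact (isUnit_star.mpr hZ).mul hZ
    exact isUnit_of_mul_isUnit_left h2
  have hVmem : Z * P⁻¹ ∈ Matrix.unitaryGroup n ℂ := by
    rw [Matrix.mem_unitaryGroup_iff']
    have : star (Z * P⁻¹) = P⁻¹ * Z.conjTranspose := by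
      rw [Matrix.star_eq_conjTranspose, Matrix.conjTranspose_mul,
        Matrix.conjTranspose_nonsing_inv, hPH]
    rw [this]
    calc P⁻¹ * Z.conjTranspose * (Z * P⁻¹) = P⁻¹ * (Z.conjTranspose * Z) * P⁻¹ := by
          simp only [Matrix.mul_assoc]
      _ = P⁻¹ * (P * P) * P⁻¹ := by rw [hP2]
      _ = (P⁻¹ * P) * (P * P⁻¹) := by simp only [Matrix.mul_assoc]
      _ = 1 := by rw [Matrix.nonsing_inv_mul _ hdet, Matrix.mul_nonsing_inv _ hdet, one_mul]
  have hherm : P.IsHermitian := hPsd.1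
  have hspec := hherm.spectral_theorem
  rw [Unitary.conjStarAlgAut_apply] at hspec
  set U : Matrix n n ℂ := (hherm.eigenvectorUnitary : Matrix n n ℂ) with hU
  refine ⟨Z * P⁻¹ * U, star U, mul_mem hVmem hherm.eigenvectorUnitary.2,
    Unitary.star_mem hherm.eigenvectorUnitary.2, RCLike.ofReal ∘ hherm.eigenvalues, ?_⟩
  calc Z = Z * P⁻¹ * P := by rw [Matrix.nonsing_inv_mul_cancel_right _ _ hdet]
    _ = Z * P⁻¹ * (U * Matrix.diagonal (RCLike.ofReal ∘ hherm.eigenvalues) * star U) := by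
        rw [← hspec]
    _ = Z * P⁻¹ * U * Matrix.diagonal (RCLike.ofReal ∘ hherm.eigenvalues) * star U := by
        simp only [Matrix.mul_assoc]

lemma diagonal_mem_unitary {n : Type*} [Fintype n] [DecidableEq n] (e : n → ℂ)
    (he : ∀ i, ‖e i‖ = 1) :
    Matrix.diagonal e ∈ Matrix.unitaryGroup n ℂ := by
  rw [Matrix.mem_unitaryGroup_iff', Matrix.star_eq_conjTranspose,
    Matrix.diagonal_conjTranspose, Matrix.diagonal_mul_diagonal]
  have h2 : (fun i => star e i * e i) = fun _ => (1 : ℂ) := by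
    funext i
    show star (e i) * e i = 1
    have h3 : ‖e i‖ ^ 2 = 1 := by rw [he i]; norm_num
    rw [← Complex.normSq_eq_norm_sq] at h3
    rw [RCLike.star_def, mul_comm, Complex.mul_conj, h3, Complex.ofReal_one]
  rw [h2, Matrix.diagonal_one]

lemma vanish_on_unitary {k : ℕ} {ℓ : Fin k → ℕ}
    (q : MvPolynomial (Σ r : Fin k, Fin (ℓ r) × Fin (ℓ r)) ℂ)
    (hq : ∀ U : ∀ r : Fin k, Matrix (Fin (ℓ r)) (Fin (ℓ r)) ℂ,
      (∀ r, U r ∈ Matrix.unitaryGroup (Fin (ℓ r)) ℂ) →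
      eval (fun v => U v.1 v.2.1 v.2.2) q = 0) :
    q = 0 := by
  classical
  -- Step A: vanishing on V * diagonal d * W for unitary V, W and arbitrary complex diagonal d
  have stepA : ∀ (V W : ∀ r : Fin k, Matrix (Fin (ℓ r)) (Fin (ℓ r)) ℂ),
      (∀ r, V r ∈ Matrix.unitaryGroup (Fin (ℓ r)) ℂ) →
      (∀ r, W r ∈ Matrix.unitaryGroup (Fin (ℓ r)) ℂ) →
      ∀ d : ∀ r : Fin k, Fin (ℓ r) → ℂ,
      eval (fun v => (V v.1 * Matrix.diagonal (d v.1) * W v.1) v.2.1 v.2.2) q = 0 := by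
    intro V W hV hW d
    set g : (Σ r : Fin k, Fin (ℓ r) × Fin (ℓ r)) → MvPolynomial (Σ r : Fin k, Fin (ℓ r)) ℂ :=
      fun v => ∑ m : Fin (ℓ v.1), C (V v.1 v.2.1 m * W v.1 m v.2.2) * X ⟨v.1, m⟩ with hg
    have claim1 : ∀ x : (Σ r : Fin k, Fin (ℓ r)) → ℂ,
        eval x (eval₂ C g q) =
          eval (fun v => (V v.1 * Matrix.diagonal (fun m => x ⟨v.1, m⟩) * W v.1) v.2.1 v.2.2) q := by
      intro x
      rw [eval_eval₂C]
      have hfun : (fun v : Σ r : Fin k, Fin (ℓ r) × Fin (ℓ r) => eval x (g v)) =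
          fun v => (V v.1 * Matrix.diagonal (fun m => x ⟨v.1, m⟩) * W v.1) v.2.1 v.2.2 := by
        funext v
        rw [hg]
        simp only [map_sum, map_mul, eval_C, eval_X]
        rw [Matrix.mul_apply]
        congr 1
        funext m
        rw [Matrix.mul_diagonal]
        ring
      rw [hfun]
    have claim2 : eval₂ C g q = 0 := by
      apply torus_zero
      intro x hx
      rw [claim1 x]
      exact hq (fun r => V r * Matrix.diagonal (fun m => x ⟨r, m⟩) * W r)
        (fun r => mul_mem (mul_mem (hV r) (diagonal_mem_unitary _ fun m => hx ⟨r, m⟩)) (hW r))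
    have := claim1 (fun t => d t.1 t.2)
    rw [claim2, map_zero] at this
    exact this.symm
  -- Step B: vanishing on tuples of invertible matrices
  have stepB : ∀ Z : ∀ r : Fin k, Matrix (Fin (ℓ r)) (Fin (ℓ r)) ℂ,
      (∀ r, IsUnit (Z r).det) → eval (fun v => Z v.1 v.2.1 v.2.2) q = 0 := by
    intro Z hZ
    choose V W hV hW d hZd using fun r => exists_udw (Z r) (hZ r)
    have : (fun v : Σ r : Fin k, Fin (ℓ r) × Fin (ℓ r) => Z v.1 v.2.1 v.2.2) =
        fun v => (V v.1 * Matrix.diagonal (d v.1) * W v.1) v.2.1 v.2.2 := by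
      funext v
      rw [hZd v.1]
    rw [this]
    exact stepA V W hV hW d
  -- Step C: multiply by determinant polynomials and conclude
  set D : Fin k → MvPolynomial (Σ r : Fin k, Fin (ℓ r) × Fin (ℓ r)) ℂ :=
    fun r => Matrix.det (Matrix.of fun i j : Fin (ℓ r) => X ⟨r, (i, j)⟩) with hDdef
  have hD : ∀ (x : (Σ r : Fin k, Fin (ℓ r) × Fin (ℓ r)) → ℂ) r,
      eval x (D r) = Matrix.det (Matrix.of fun i j : Fin (ℓ r) => x ⟨r, (i, j)⟩) := by
    intro x r
    rw [hDdef]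
    rw [show (eval x) (Matrix.det (Matrix.of fun i j : Fin (ℓ r) => X ⟨r, (i, j)⟩)) =
      (eval x : MvPolynomial _ ℂ →+* ℂ) (Matrix.det _) from rfl, RingHom.map_det]
    congr 1
    ext i j
    simp [Matrix.map_apply]
  have hDne : ∀ r, D r ≠ 0 := by
    intro r h0
    have := hD (fun v => if v.2.1 = v.2.2 then 1 else 0) r
    rw [h0, map_zero] at this
    have h1 : (Matrix.of fun i j : Fin (ℓ r) =>
        if (⟨r, (i, j)⟩ : Σ r : Fin k, Fin (ℓ r) × Fin (ℓ r)).2.1 =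
          (⟨r, (i, j)⟩ : Σ r : Fin k, Fin (ℓ r) × Fin (ℓ r)).2.2 then (1:ℂ) else 0) = 1 := by
      ext i j
      simp [Matrix.one_apply]
    rw [h1, Matrix.det_one] at this
    exact one_ne_zero this.symm
  have hprod : q * ∏ r, D r = 0 := by
    apply MvPolynomial.funext (q := 0)
    intro x
    rw [map_zero, map_mul, map_prod]
    by_cases hall : ∀ r, Matrix.det (Matrix.of fun i j : Fin (ℓ r) => x ⟨r, (i, j)⟩) ≠ 0
    · have : eval x q = 0 := by
        have := stepB (fun r => Matrix.of fun i j : Fin (ℓ r) => x ⟨r, (i, j)⟩)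
          (fun r => isUnit_iff_ne_zero.mpr (hall r))
        convert this using 2
        rfl
      rw [this, zero_mul]
    · push_neg at hall
      obtain ⟨r, hr⟩ := hall
      rw [Finset.prod_eq_zero (Finset.mem_univ r) ((hD x r).trans hr), mul_zero]
  rcases mul_eq_zero.mp hprod with h | h
  · exact h
  · exact absurd h (Finset.prod_ne_zero_iff.mpr fun r _ => hDne r)

lemma opNorm_smul_unitary {n : Type*} [Fintype n] [DecidableEq n]
    {U : Matrix n n ℂ} (hU : U ∈ Matrix.unitaryGroup n ℂ) (z : ℂ) :
    ‖Matrix.toEuclideanCLM (𝕜 := ℂ) (z • U)‖ ≤ ‖z‖ := by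
  have hmem : Matrix.toEuclideanCLM (𝕜 := ℂ) U ∈
      unitary (EuclideanSpace ℂ n →L[ℂ] EuclideanSpace ℂ n) := by
    constructor
    · rw [← map_star, ← map_mul, hU.1, map_one]
    · rw [← map_star, ← map_mul, hU.2, map_one]
  apply ContinuousLinearMap.opNorm_le_bound _ (norm_nonneg z)
  intro x
  rw [map_smul, ContinuousLinearMap.smul_apply, norm_smul,
    ContinuousLinearMap.norm_map_of_mem_unitary hmem]

lemma smul_unitary_mem {n : Type*} [Fintype n] [DecidableEq n]
    {U : Matrix n n ℂ} (hU : U ∈ Matrix.unitaryGroup n ℂ) {z : ℂ}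
    (hz : ‖z‖ = 1) : z • U ∈ Matrix.unitaryGroup n ℂ := by
  rw [Matrix.mem_unitaryGroup_iff']
  rw [star_smul, Matrix.smul_mul, Matrix.mul_smul, smul_smul]
  rw [Matrix.mem_unitaryGroup_iff'.mp hU]
  have : star z * z = 1 := by
    rw [RCLike.star_def, mul_comm, Complex.mul_conj, ← Complex.sq_norm, hz]
    norm_num
  rw [this, one_smul]

/-- Operator norm of a complex matrix (norm of the induced operator on Euclidean space). -/
noncomputable def opNorm {ι : Type*} [Fintype ι] [DecidableEq ι] (M : Matrix ι ι ℂ) : ℝ :=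
  ‖Matrix.toEuclideanCLM (𝕜 := ℂ) M‖

lemma eval_unitary_eq_const (k : ℕ) (ℓ : Fin k → ℕ)
    (p : MvPolynomial (Σ r : Fin k, Fin (ℓ r) × Fin (ℓ r)) ℂ)
    (hstable : ∀ Z : ∀ r : Fin k, Matrix (Fin (ℓ r)) (Fin (ℓ r)) ℂ,
      (∀ r, opNorm (Z r) < 1) → eval (fun v => Z v.1 v.2.1 v.2.2) p ≠ 0)
    (hmod : ∀ Z : ∀ r : Fin k, Matrix (Fin (ℓ r)) (Fin (ℓ r)) ℂ,
      (∀ r, Z r ∈ Matrix.unitaryGroup (Fin (ℓ r)) ℂ) →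
      ‖eval (fun v => Z v.1 v.2.1 v.2.2) p‖ = 1)
    (U : ∀ r : Fin k, Matrix (Fin (ℓ r)) (Fin (ℓ r)) ℂ)
    (hU : ∀ r, U r ∈ Matrix.unitaryGroup (Fin (ℓ r)) ℂ) :
    eval (fun v => U v.1 v.2.1 v.2.2) p = eval (fun _ => 0) p := by
  classical
  set F : Polynomial ℂ :=
    eval₂ Polynomial.C (fun v => Polynomial.C (U v.1 v.2.1 v.2.2) * Polynomial.X) p with hF
  have hFeval : ∀ z : ℂ, F.eval z = eval (fun v => z * U v.1 v.2.1 v.2.2) p := by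
    intro z
    have key := eval₂_comp_left (Polynomial.evalRingHom z) Polynomial.C
      (fun v : Σ r : Fin k, Fin (ℓ r) × Fin (ℓ r) =>
        Polynomial.C (U v.1 v.2.1 v.2.2) * Polynomial.X) p
    have hid : (Polynomial.evalRingHom z).comp Polynomial.C = RingHom.id ℂ := by
      ext a; simp
    have hfun : ((Polynomial.evalRingHom z) ∘
        fun v : Σ r : Fin k, Fin (ℓ r) × Fin (ℓ r) =>
          Polynomial.C (U v.1 v.2.1 v.2.2) * Polynomial.X) =
        fun v => z * U v.1 v.2.1 v.2.2 := by
      funext v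
      show Polynomial.eval z (Polynomial.C (U v.1 v.2.1 v.2.2) * Polynomial.X) = _
      rw [Polynomial.eval_mul, Polynomial.eval_C, Polynomial.eval_X, mul_comm]
    rw [hid, hfun, eval₂_id] at key
    rw [hF]
    exact key
  have hdiff : Differentiable ℂ fun z => F.eval z := F.differentiable
  have hsmul : ∀ z : ℂ, (fun v : Σ r : Fin k, Fin (ℓ r) × Fin (ℓ r) =>
      (z • U v.1) v.2.1 v.2.2) = fun v => z * U v.1 v.2.1 v.2.2 := by
    intro z; funext v; simp [Matrix.smul_apply]
  have hmodeq : ∀ z : ℂ, ‖z‖ = 1 → ‖F.eval z‖ = 1 := by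
    intro z hz
    rw [hFeval, ← hsmul z]
    exact hmod (fun r => z • U r)
      (fun r => smul_unitary_mem (hU r) (by rw [hz]))
  have hne : ∀ z ∈ Metric.closedBall (0:ℂ) 1, F.eval z ≠ 0 := by
    intro z hz
    rw [Metric.mem_closedBall, dist_zero_right] at hz
    rcases lt_or_eq_of_le hz with h | h
    · have hcond : ∀ r, opNorm (z • U r) < 1 := by
        intro r
        show ‖Matrix.toEuclideanCLM (𝕜 := ℂ) (z • U r)‖ < 1
        exact lt_of_le_of_lt (opNorm_smul_unitary (hU r) z) (by assumption)
      have hst := hstable (fun r => z • U r) hcond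
      rw [hsmul z] at hst
      rw [hFeval]
      exact hst
    · intro h0
      have := hmodeq z h
      rw [h0, norm_zero] at this
      exact zero_ne_one this
  have hle : ∀ w ∈ Metric.closedBall (0:ℂ) 1, ‖F.eval w‖ ≤ 1 := by
    intro w hw
    refine Complex.norm_le_of_forall_mem_frontier_norm_le (U := Metric.ball (0:ℂ) 1)
      Metric.isBounded_ball hdiff.diffContOnCl ?_ ?_
    · intro z hz
      rw [frontier_ball (0:ℂ) one_ne_zero, mem_sphere_iff_norm, sub_zero] at hz
      exact le_of_eq (hmodeq z hz)
    · rwa [closure_ball (0:ℂ) one_ne_zero]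
  have hge : ∀ w ∈ Metric.closedBall (0:ℂ) 1, 1 ≤ ‖F.eval w‖ := by
    intro w hw
    have hg : DiffContOnCl ℂ (fun z => (F.eval z)⁻¹) (Metric.ball 0 1) := by
      constructor
      · exact DifferentiableOn.inv hdiff.differentiableOn
          (fun x hx => hne x (Metric.ball_subset_closedBall hx))
      · rw [closure_ball (0:ℂ) one_ne_zero]
        exact (hdiff.continuous.continuousOn).inv₀ hne
    have hinv : ‖(F.eval w)⁻¹‖ ≤ 1 := by
      refine Complex.norm_le_of_forall_mem_frontier_norm_le (U := Metric.ball (0:ℂ) 1)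
        Metric.isBounded_ball hg ?_ ?_
      · intro z hz
        rw [frontier_ball (0:ℂ) one_ne_zero, mem_sphere_iff_norm, sub_zero] at hz
        rw [norm_inv, hmodeq z hz]
        norm_num
      · rwa [closure_ball (0:ℂ) one_ne_zero]
    rw [norm_inv] at hinv
    have hpos : 0 < ‖F.eval w‖ := norm_pos_iff.mpr (hne w hw)
    rw [inv_le_one_iff₀] at hinv
    rcases hinv with h | h
    · exact absurd h (not_le.mpr hpos)
    · exact h
  have hmax : IsMaxOn (norm ∘ fun z => F.eval z) (Metric.ball (0:ℂ) 1) 0 := by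
    intro z hz
    simp only [Function.comp_apply, Set.mem_setOf_eq]
    calc ‖F.eval z‖ ≤ 1 := hle z (Metric.ball_subset_closedBall hz)
      _ ≤ ‖F.eval 0‖ := hge 0 (by simp)
  have heq := Complex.eqOn_closedBall_of_isMaxOn_norm hdiff.diffContOnCl hmax
  have h10 : F.eval 1 = F.eval 0 :=
    heq (by simp : (1:ℂ) ∈ Metric.closedBall (0:ℂ) 1)
  rw [hFeval, hFeval] at h10
  have e1 : (fun v : Σ r : Fin k, Fin (ℓ r) × Fin (ℓ r) => (1:ℂ) * U v.1 v.2.1 v.2.2) =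
      fun v => U v.1 v.2.1 v.2.2 := by funext v; rw [one_mul]
  have e0 : (fun v : Σ r : Fin k, Fin (ℓ r) × Fin (ℓ r) => (0:ℂ) * U v.1 v.2.1 v.2.2) =
      fun _ => (0:ℂ) := by funext v; rw [zero_mul]
  rwa [e1, e0] at h10


/-- A polynomial in the entries of a `k`-tuple of square matrix variables with no zeros
on the unit square-matrix polyball and unimodular values at all tuples of unitary matrices
is a unimodular constant times a product of powers of the block determinants. -/
theorem polyball_stable_unimodular_is_product_of_det_powers (k : ℕ) (ℓ : Fin k → ℕ)
    (p : MvPolynomial (Σ r : Fin k, Fin (ℓ r) × Fin (ℓ r)) ℂ)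
    (hstable : ∀ Z : ∀ r : Fin k, Matrix (Fin (ℓ r)) (Fin (ℓ r)) ℂ,
      (∀ r, opNorm (Z r) < 1) → eval (fun v => Z v.1 v.2.1 v.2.2) p ≠ 0)
    (hmod : ∀ Z : ∀ r : Fin k, Matrix (Fin (ℓ r)) (Fin (ℓ r)) ℂ,
      (∀ r, Z r ∈ Matrix.unitaryGroup (Fin (ℓ r)) ℂ) →
      ‖eval (fun v => Z v.1 v.2.1 v.2.2) p‖ = 1) :
    ∃ (m : Fin k → ℕ) (c : ℂ), ‖c‖ = 1 ∧
      p = C c * ∏ r, (Matrix.det (Matrix.of fun i j : Fin (ℓ r) =>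
        (X ⟨r, (i, j)⟩ : MvPolynomial (Σ r : Fin k, Fin (ℓ r) × Fin (ℓ r)) ℂ))) ^ m r := by
  classical
  set c := eval (fun _ => (0:ℂ)) p with hc
  have hval := eval_unitary_eq_const k ℓ p hstable hmod
  have hone : ∀ r, (1 : Matrix (Fin (ℓ r)) (Fin (ℓ r)) ℂ) ∈ Matrix.unitaryGroup (Fin (ℓ r)) ℂ :=
    fun r => one_mem _
  have habs : ‖c‖ = 1 := by
    have h1 := hmod (fun _ => 1) hone
    rw [hval (fun _ => 1) hone] at h1
    exact h1
  have hq : p - C c = 0 := by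
    apply vanish_on_unitary
    intro U hU
    rw [map_sub, eval_C, hval U hU, sub_self]
  refine ⟨fun _ => 0, c, habs, ?_⟩
  rw [eq_of_sub_eq_zero hq]
  simp
end

section
/- Every completely positive linear map Φ : ℂ^{a×a} → ℂ^{b×b} admits a representation Φ(X) = Y*(X ⊗ I_{ab})Y for some matrix Y ∈ ℂ^{a²b × b}. -/
open Kronecker Matrix ComplexOrder

/-- Choi's theorem: every completely positive linear map `Φ : ℂ^{a×a} → ℂ^{b×b}` has the form
`Φ(X) = Y* (X ⊗ I_{ab}) Y` for some `Y ∈ ℂ^{a²b × b}`. -/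
theorem choi_representation {a b : ℕ}
    (Φ : Matrix (Fin a) (Fin a) ℂ →ₗ[ℂ] Matrix (Fin b) (Fin b) ℂ)
    (hcp : ∀ (m : ℕ) (A : Matrix (Fin m × Fin a) (Fin m × Fin a) ℂ), A.PosSemidef →
      (Matrix.of fun p q : Fin m × Fin b =>
        Φ (Matrix.of fun i j => A (p.1, i) (q.1, j)) p.2 q.2).PosSemidef) :
    ∃ Y : Matrix (Fin a × Fin (a * b)) (Fin b) ℂ,
      ∀ X : Matrix (Fin a) (Fin a) ℂ,
        Φ X = Yᴴ * (X ⊗ₖ (1 : Matrix (Fin (a * b)) (Fin (a * b)) ℂ)) * Y := by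
  classical
  -- the maximally entangled state projector
  set v : Fin a × Fin a → ℂ := fun p => if p.1 = p.2 then 1 else 0 with hv
  have hA : (vecMulVec v (star v)).PosSemidef := by
    rw [vecMulVec_eq Unit, ← conjTranspose_replicateCol]
    exact posSemidef_self_mul_conjTranspose _
  -- the Choi matrix is positive semidefinite
  have hC := hcp a _ hA
  open scoped MatrixOrder in
  obtain ⟨M, hM⟩ := CStarAlgebra.nonneg_iff_eq_star_mul_self.mp hC.nonneg
  rw [star_eq_conjTranspose] at hM
  -- hM gives Φ on standard basis matrices
  have key : ∀ (i j : Fin a) (p q : Fin b),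
      Φ (single i j 1) p q
        = ∑ r : Fin a × Fin b, star (M r (i, p)) * M r (j, q) := by
    intro i j p q
    have h1 : (Matrix.of fun k l : Fin a =>
        (vecMulVec v (star v)) ((i, p).1, k) ((j, q).1, l)) = single i j 1 := by
      ext k l
      simp only [Matrix.of_apply, vecMulVec_apply, Pi.star_apply, hv, single,
        Matrix.of_apply]
      by_cases hik : i = k <;> by_cases hjl : j = l <;> simp [hik, hjl]
    have h2 := congrFun (congrFun hM (i, p)) (j, q)
    simp only [Matrix.of_apply] at h2
    rw [h1] at h2
    rw [h2, Matrix.mul_apply]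
    simp [Matrix.conjTranspose_apply]
  -- construct Y
  set e : Fin (a * b) ≃ Fin a × Fin b := finProdFinEquiv.symm with he
  set Y : Matrix (Fin a × Fin (a * b)) (Fin b) ℂ :=
    Matrix.of fun u q => M (e u.2) (u.1, q) with hY
  refine ⟨Y, fun X => ?_⟩
  ext p q
  -- expand the left side by linearity
  have hX : Φ X = ∑ i : Fin a, ∑ j : Fin a, X i j • Φ (single i j 1) := by
    conv_lhs => rw [matrix_eq_sum_single X]
    rw [map_sum]
    refine Finset.sum_congr rfl fun i _ => ?_
    rw [map_sum]
    refine Finset.sum_congr rfl fun j _ => ?_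
    have hs : single i j (X i j) = X i j • single i j 1 := by
      rw [smul_single, smul_eq_mul, mul_one]
    rw [hs]; exact _root_.map_smul Φ _ _
  rw [hX]
  simp only [Matrix.sum_apply, Matrix.smul_apply, smul_eq_mul]
  -- expand the right side
  have hR : (Yᴴ * (X ⊗ₖ (1 : Matrix (Fin (a * b)) (Fin (a * b)) ℂ)) * Y) p q
      = ∑ i : Fin a, ∑ j : Fin a,
          ∑ s : Fin (a * b), X i j * (star (M (e s) (i, p)) * M (e s) (j, q)) := by
    rw [Matrix.mul_apply]
    simp only [Matrix.mul_apply, Finset.sum_mul]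
    rw [Finset.sum_comm]
    rw [Fintype.sum_prod_type]
    refine Finset.sum_congr rfl fun i _ => ?_
    rw [Finset.sum_comm, Fintype.sum_prod_type]
    refine Finset.sum_congr rfl fun j _ => ?_
    rw [Finset.sum_comm]
    refine Finset.sum_congr rfl fun s _ => ?_
    simp only [hY, Matrix.conjTranspose_apply, Matrix.of_apply, Matrix.kroneckerMap_apply,
      Matrix.one_apply, mul_ite, mul_zero, mul_one, ite_mul, zero_mul,
      Finset.sum_ite_eq, Finset.mem_univ, if_true]
    ring
  rw [hR]
  refine Finset.sum_congr rfl fun i _ => Finset.sum_congr rfl fun j _ => ?_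
  rw [key i j p q, Finset.mul_sum, ← Equiv.sum_comp e fun r => X i j * (star (M r (i, p)) * M r (j, q))]
end

section
/- Let f(z) = z^m p̌(z)/p(z) be a scalar rational inner function on 𝔻^d with p stable (no zeros in 𝔻^d) and coprime with p̌, and suppose f is the transfer function f(z) = D + C Z_n (I − A Z_n)^{-1} B of a unitary colligation [A B; C D], where Z_n = ⊕_{r=1}^d z_r I_{n_r}. Then p divides the polynomial z ↦ det(I − A Z_n) in ℂ[z_1,...,z_d]. -/
open MvPolynomial

section AuxLemmas

open Matrix

/-- Block diagonal of scalar blocks is a diagonal matrix. -/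
lemma aux_blockDiag {d : ℕ} (n : Fin d → ℕ) {R : Type*} [Semiring R] (f : Fin d → R) :
    Matrix.blockDiagonal' (fun r => f r • (1 : Matrix (Fin (n r)) (Fin (n r)) R)) =
      Matrix.diagonal (fun k : Σ r : Fin d, Fin (n r) => f k.1) := by
  ext ⟨r, i⟩ ⟨s, j⟩
  rw [Matrix.blockDiagonal'_apply]
  by_cases h : r = s
  · subst h
    simp only [dif_pos rfl, Matrix.smul_apply, Matrix.one_apply, Matrix.diagonal_apply]
    by_cases hij : i = j
    · subst hij; simp
    · simp [hij, Sigma.ext_iff]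
  · simp [h, Matrix.diagonal_apply, Sigma.ext_iff]

/-- Each variable is prime in `MvPolynomial (Fin d) ℂ`. -/
lemma aux_primeX {d : ℕ} (i : Fin d) : Prime (X i : MvPolynomial (Fin d) ℂ) := by
  have h : (X i : MvPolynomial (Fin d) ℂ) =
      rename ((↑) : ({i} : Set (Fin d)) → Fin d) (X ⟨i, rfl⟩) := by simp
  rw [h, MvPolynomial.prime_rename_iff]
  haveI : Unique ({i} : Set (Fin d)) := Set.uniqueSingleton i
  let e : MvPolynomial ({i} : Set (Fin d)) ℂ ≃* Polynomial ℂ :=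
    ((renameEquiv ℂ (Equiv.equivPUnit.{_, 1} ({i} : Set (Fin d)))).trans
      (pUnitAlgEquiv ℂ)).toMulEquiv
  rw [← MulEquiv.prime_iff e]
  have : e (X ⟨i, rfl⟩) = Polynomial.X := by
    simp [e, renameEquiv]
  rw [this]
  exact Polynomial.prime_X

lemma aux_dot {ι : Type*} (v : ι → ℂ) [Fintype ι] :
    star v ⬝ᵥ v = ((∑ k, Complex.normSq (v k) : ℝ) : ℂ) := by
  simp only [dotProduct, Pi.star_apply, Complex.ofReal_sum]
  refine Finset.sum_congr rfl fun k _ => ?_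
  rw [Complex.star_def, mul_comm, Complex.mul_conj]

/-- The `A` block of a unitary colligation is a contraction. -/
lemma aux_contraction {ι κ : Type*} [Fintype ι] [Fintype κ] [DecidableEq ι] [DecidableEq κ]
    (A : Matrix ι ι ℂ) (B : Matrix ι κ ℂ) (C : Matrix κ ι ℂ) (D : Matrix κ κ ℂ)
    (hU : Matrix.fromBlocks A B C D ∈ Matrix.unitaryGroup (ι ⊕ κ) ℂ) (w : ι → ℂ) :
    ∑ k, Complex.normSq ((A *ᵥ w) k) ≤ ∑ k, Complex.normSq (w k) := by
  set F := Matrix.fromBlocks A B C D with hF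
  have h1 : Fᴴ * F = 1 := hU.1
  set w' : ι ⊕ κ → ℂ := Sum.elim w 0 with hw'
  set u : ι ⊕ κ → ℂ := F *ᵥ w' with hu0
  have hu : u = Sum.elim (A *ᵥ w) (C *ᵥ w) := by
    rw [hu0, hF, hw', Matrix.fromBlocks_mulVec]
    simp
  have hdot : star u ⬝ᵥ u = star w' ⬝ᵥ w' := by
    rw [hu0, Matrix.star_mulVec, ← Matrix.dotProduct_mulVec, Matrix.mulVec_mulVec, h1,
      Matrix.one_mulVec]
  rw [aux_dot, aux_dot, Complex.ofReal_inj] at hdot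
  have hL : ∑ k, Complex.normSq (u k) =
      (∑ k, Complex.normSq ((A *ᵥ w) k)) + ∑ k, Complex.normSq ((C *ᵥ w) k) := by
    rw [hu, Fintype.sum_sum_type]; simp
  have hR : ∑ k, Complex.normSq (w' k) = ∑ k, Complex.normSq (w k) := by
    rw [hw', Fintype.sum_sum_type]; simp
  rw [hL, hR] at hdot
  have : (0:ℝ) ≤ ∑ k, Complex.normSq ((C *ᵥ w) k) :=
    Finset.sum_nonneg fun k _ => Complex.normSq_nonneg _
  linarith

/-- `I - A Z` is invertible on the open polydisc. -/
lemma aux_det_ne_zero {ι κ : Type*} [Fintype ι] [Fintype κ] [DecidableEq ι] [DecidableEq κ]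
    (A : Matrix ι ι ℂ) (B : Matrix ι κ ℂ) (C : Matrix κ ι ℂ) (D : Matrix κ κ ℂ)
    (hU : Matrix.fromBlocks A B C D ∈ Matrix.unitaryGroup (ι ⊕ κ) ℂ)
    (g : ι → ℂ) (hg : ∀ k, ‖g k‖ < 1) :
    (1 - A * Matrix.diagonal g).det ≠ 0 := by
  intro hdet
  rw [← Matrix.exists_mulVec_eq_zero_iff] at hdet
  obtain ⟨v, hv0, hv⟩ := hdet
  have hveq : v = A *ᵥ fun k => g k * v k := by
    have h1 : (1 - A * Matrix.diagonal g) *ᵥ v = v - (A * Matrix.diagonal g) *ᵥ v := by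
      rw [Matrix.sub_mulVec, Matrix.one_mulVec]
    rw [h1] at hv
    have h2 := sub_eq_zero.mp hv
    conv_lhs => rw [h2]
    rw [← Matrix.mulVec_mulVec]
    have h3 : Matrix.diagonal g *ᵥ v = fun k => g k * v k := by
      funext k; rw [Matrix.mulVec_diagonal]
    rw [h3]
  have hle : ∑ k, Complex.normSq (v k) ≤ ∑ k, Complex.normSq (g k * v k) := by
    calc ∑ k, Complex.normSq (v k)
        = ∑ k, Complex.normSq ((A *ᵥ fun k => g k * v k) k) := by rw [← hveq]
      _ ≤ _ := aux_contraction A B C D hU _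
  have hlt : ∑ k, Complex.normSq (g k * v k) < ∑ k, Complex.normSq (v k) := by
    obtain ⟨k0, hk0⟩ := Function.ne_iff.mp hv0
    simp only [Pi.zero_apply] at hk0
    refine Finset.sum_lt_sum (fun k _ => ?_) ⟨k0, Finset.mem_univ _, ?_⟩
    · rw [Complex.normSq_mul]
      have h1 : Complex.normSq (g k) ≤ 1 := by
        rw [Complex.normSq_eq_norm_sq]
        nlinarith [hg k, norm_nonneg (g k)]
      nlinarith [Complex.normSq_nonneg (v k)]
    · rw [Complex.normSq_mul]
      have h1 : Complex.normSq (g k0) < 1 := by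
        rw [Complex.normSq_eq_norm_sq]
        nlinarith [hg k0, norm_nonneg (g k0)]
      have h2 : 0 < Complex.normSq (v k0) := by
        rw [Complex.normSq_pos]; exact hk0
      nlinarith
  linarith

/-- A polynomial vanishing on the open polydisc vanishes identically. -/
lemma aux_eq_zero_of_disc {d : ℕ} (P : MvPolynomial (Fin d) ℂ)
    (h : ∀ z : Fin d → ℂ, (∀ i, ‖z i‖ < 1) → eval z P = 0) : P = 0 := by
  have hall : ∀ z : Fin d → ℂ, eval z P = 0 := by
    intro z
    set b : ℝ := 1 + ∑ i, ‖z i‖ with hb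
    have hbpos : 0 < b := by
      have : (0:ℝ) ≤ ∑ i, ‖z i‖ :=
        Finset.sum_nonneg fun i _ => norm_nonneg _
      linarith
    have hzb : ∀ i, ‖z i‖ ≤ b := by
      intro i
      have : ‖z i‖ ≤ ∑ j, ‖z j‖ :=
        Finset.single_le_sum (fun j _ => norm_nonneg (z j)) (Finset.mem_univ i)
      linarith
    set g : Polynomial ℂ :=
      eval₂ (Polynomial.C : ℂ →+* Polynomial ℂ) (fun i => Polynomial.C (z i) * Polynomial.X) P
      with hg
    have key : ∀ t : ℂ, Polynomial.eval t g = eval (fun i => z i * t) P := by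
      intro t
      rw [hg, show Polynomial.eval t = ⇑(Polynomial.evalRingHom t) from rfl,
        MvPolynomial.eval₂_comp_left (Polynomial.evalRingHom t)]
      have h1 : (Polynomial.evalRingHom t).comp (Polynomial.C : ℂ →+* Polynomial ℂ)
          = RingHom.id ℂ := by
        ext a; simp
      have h2 : ((Polynomial.evalRingHom t) ∘ fun i => Polynomial.C (z i) * Polynomial.X)
          = fun i => z i * t := by
        funext i; simp
      rw [h1, h2]
      rfl
    have hroots : ∀ t : ℂ, ‖t‖ < 1 / b → Polynomial.eval t g = 0 := by
      intro t ht
      rw [key]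
      apply h
      intro i
      rw [norm_mul]
      calc ‖z i‖ * ‖t‖ ≤ b * ‖t‖ :=
            mul_le_mul_of_nonneg_right (hzb i) (norm_nonneg t)
        _ < b * (1 / b) := mul_lt_mul_of_pos_left ht hbpos
        _ = 1 := by field_simp
    have hginf : { t : ℂ | g.IsRoot t }.Infinite := by
      have hsub : (Complex.ofReal '' Set.Ioo 0 (1 / b)) ⊆ { t : ℂ | g.IsRoot t } := by
        rintro t ⟨s, hs, rfl⟩
        apply hroots
        rw [Complex.norm_real, Real.norm_of_nonneg hs.1.le]
        exact hs.2
      refine Set.Infinite.mono hsub ?_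
      apply Set.Infinite.image
      · exact fun x _ y _ hxy => Complex.ofReal_injective hxy
      · exact Set.Ioo_infinite (by positivity)
    have hg0 : g = 0 := Polynomial.eq_zero_of_infinite_isRoot g hginf
    have := key 1
    rw [hg0] at this
    simp only [Polynomial.eval_zero] at this
    have hz1 : (fun i => z i * 1) = z := by funext i; ring
    rw [hz1] at this
    exact this.symm
  exact MvPolynomial.funext (q := (0 : MvPolynomial (Fin d) ℂ)) (fun x => by
    rw [hall x]; simp)

end AuxLemmas

/-- If the scalar rational inner function `f = z^m p̌ / p` on `𝔻^d`, with `p` stable and coprime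
with its reverse `p̌`, is the transfer function of a unitary colligation `[A B; C D]` with
`Zₙ = ⊕ᵣ zᵣ I_{nᵣ}`, then `p` divides the polynomial `det (I - A Zₙ)`. -/
theorem denominator_divides_det_of_realization (d : ℕ) (n : Fin d → ℕ)
    (p pr : MvPolynomial (Fin d) ℂ) (m : Fin d → ℕ)
    (hstable : ∀ z : Fin d → ℂ, (∀ i, ‖z i‖ < 1) → eval z p ≠ 0)
    (hrev : ∀ z : Fin d → ℂ, (∀ i, z i ≠ 0) →
      eval z pr = (∏ i, z i ^ p.degreeOf i) *
        (starRingEnd ℂ) (eval (fun i => ((starRingEnd ℂ) (z i))⁻¹) p))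
    (hcoprime : ∀ r : MvPolynomial (Fin d) ℂ, r ∣ p → r ∣ pr → IsUnit r)
    (A : Matrix (Σ r : Fin d, Fin (n r)) (Σ r : Fin d, Fin (n r)) ℂ)
    (B : Matrix (Σ r : Fin d, Fin (n r)) (Fin 1) ℂ)
    (C : Matrix (Fin 1) (Σ r : Fin d, Fin (n r)) ℂ)
    (D : Matrix (Fin 1) (Fin 1) ℂ)
    (hU : Matrix.fromBlocks A B C D ∈ Matrix.unitaryGroup ((Σ r : Fin d, Fin (n r)) ⊕ Fin 1) ℂ)
    (htransfer : ∀ z : Fin d → ℂ, (∀ i, ‖z i‖ < 1) →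
      eval z ((∏ i, X i ^ m i) * pr) =
        eval z p *
          ((D + C * Matrix.blockDiagonal' (fun r => z r • (1 : Matrix (Fin (n r)) (Fin (n r)) ℂ)) *
              (1 - A * Matrix.blockDiagonal'
                (fun r => z r • (1 : Matrix (Fin (n r)) (Fin (n r)) ℂ)))⁻¹ * B) 0 0)) :
    p ∣ Matrix.det (1 - A.map MvPolynomial.C * Matrix.blockDiagonal'
      (fun r => (X r : MvPolynomial (Fin d) ℂ) • (1 : Matrix (Fin (n r)) (Fin (n r)) _))) := by
  classical
  rw [aux_blockDiag]
  set Zp : Matrix (Σ r : Fin d, Fin (n r)) (Σ r : Fin d, Fin (n r)) (MvPolynomial (Fin d) ℂ) :=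
    Matrix.diagonal (fun k : Σ r : Fin d, Fin (n r) => X k.1) with hZp
  set M : Matrix (Σ r : Fin d, Fin (n r)) (Σ r : Fin d, Fin (n r)) (MvPolynomial (Fin d) ℂ) :=
    1 - A.map MvPolynomial.C * Zp with hM
  set N : MvPolynomial (Fin d) ℂ :=
    M.det * MvPolynomial.C (D 0 0) +
      ((C.map (MvPolynomial.C : ℂ → MvPolynomial (Fin d) ℂ) * Zp * M.adjugate *
        B.map (MvPolynomial.C : ℂ → MvPolynomial (Fin d) ℂ) :
        Matrix (Fin 1) (Fin 1) (MvPolynomial (Fin d) ℂ))) 0 0 with hN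
  -- Step 1: the key polynomial identity `z^m p̌ Q = p N`.
  have hpoint : ∀ z : Fin d → ℂ, (∀ i, ‖z i‖ < 1) →
      eval z ((∏ i, X i ^ m i) * pr * M.det - p * N) = 0 := by
    intro z hz
    set g : (Σ r : Fin d, Fin (n r)) → ℂ := fun k => z k.1 with hgdef
    set Mc : Matrix (Σ r : Fin d, Fin (n r)) (Σ r : Fin d, Fin (n r)) ℂ :=
      1 - A * Matrix.diagonal g with hMc
    have hAmap : (A.map MvPolynomial.C).map (eval z) = A := by
      ext k l; simp [Matrix.map_apply]
    have hCmap : (C.map (MvPolynomial.C : ℂ → MvPolynomial (Fin d) ℂ)).map (eval z) = C := by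
      ext k l; simp [Matrix.map_apply]
    have hBmap : (B.map (MvPolynomial.C : ℂ → MvPolynomial (Fin d) ℂ)).map (eval z) = B := by
      ext k l; simp [Matrix.map_apply]
    have hZmap : Zp.map (eval z) = Matrix.diagonal g := by
      rw [hZp, Matrix.diagonal_map (map_zero _)]
      simp [hgdef]
    have hMmap : (eval z).mapMatrix M = Mc := by
      rw [hM, hMc, _root_.map_sub, _root_.map_one, _root_.map_mul,
        RingHom.mapMatrix_apply, RingHom.mapMatrix_apply, hAmap, hZmap]
    have hdet : eval z M.det = Mc.det := by
      rw [RingHom.map_det, hMmap]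
    have hadj : (eval z).mapMatrix M.adjugate = Mc.adjugate := by
      rw [RingHom.map_adjugate, hMmap]
    have hq : Mc.det ≠ 0 := by
      rw [hMc]
      exact aux_det_ne_zero A B C D hU g (fun k => hz k.1)
    have hqU : IsUnit Mc.det := isUnit_iff_ne_zero.mpr hq
    have hNval : eval z N = Mc.det * D 0 0 +
        (C * Matrix.diagonal g * Mc.adjugate * B) 0 0 := by
      rw [hN, _root_.map_add, _root_.map_mul, hdet, eval_C]
      congr 1
      have hadj' : M.adjugate.map (eval z) = Mc.adjugate := by
        rw [← RingHom.mapMatrix_apply, hadj]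
      have hmm : ((C.map (MvPolynomial.C : ℂ → MvPolynomial (Fin d) ℂ) * Zp * M.adjugate *
            B.map (MvPolynomial.C : ℂ → MvPolynomial (Fin d) ℂ)).map (eval z)) =
          C * Matrix.diagonal g * Mc.adjugate * B := by
        rw [Matrix.map_mul, Matrix.map_mul, Matrix.map_mul, hCmap, hBmap, hZmap, hadj']
      calc eval z ((C.map (MvPolynomial.C : ℂ → MvPolynomial (Fin d) ℂ) * Zp * M.adjugate *
            B.map (MvPolynomial.C : ℂ → MvPolynomial (Fin d) ℂ) :
            Matrix (Fin 1) (Fin 1) (MvPolynomial (Fin d) ℂ)) 0 0)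
          = ((C.map (MvPolynomial.C : ℂ → MvPolynomial (Fin d) ℂ) * Zp * M.adjugate *
              B.map (MvPolynomial.C : ℂ → MvPolynomial (Fin d) ℂ)).map (eval z)) 0 0 := rfl
        _ = (C * Matrix.diagonal g * Mc.adjugate * B) 0 0 := by rw [hmm]
    have hTq := htransfer z hz
    rw [aux_blockDiag n z, ← hgdef, ← hMc] at hTq
    -- the scalar algebra on the disc
    have hkey : (D + C * Matrix.diagonal g * Mc⁻¹ * B) 0 0 * Mc.det =
        Mc.det * D 0 0 + (C * Matrix.diagonal g * Mc.adjugate * B) 0 0 := by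
      have hinv : Mc⁻¹ = Ring.inverse Mc.det • Mc.adjugate := Matrix.inv_def Mc
      have hsmul : C * Matrix.diagonal g * Mc⁻¹ * B =
          Ring.inverse Mc.det • (C * Matrix.diagonal g * Mc.adjugate * B) := by
        rw [hinv, Matrix.mul_smul, Matrix.smul_mul]
      rw [Matrix.add_apply, hsmul, Matrix.smul_apply, smul_eq_mul, add_mul, mul_assoc,
        mul_comm (Ring.inverse Mc.det) _, mul_assoc, Ring.mul_inverse_cancel _ hqU]
      ring
    rw [_root_.map_sub, _root_.map_mul, hdet, hTq]
    rw [_root_.map_mul, hNval, mul_assoc, hkey]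
    ring
  have hid : (∏ i, X i ^ m i) * pr * M.det = p * N := by
    have h0 := aux_eq_zero_of_disc _ hpoint
    exact sub_eq_zero.mp h0
  -- Step 2: relative primality of `p` with `z^m p̌`.
  have hX : ∀ i : Fin d, IsRelPrime p (X i : MvPolynomial (Fin d) ℂ) := by
    intro i c hcp hcx
    obtain ⟨e, he⟩ := hcx
    rcases (aux_primeX i).irreducible.isUnit_or_isUnit he with h | h
    · exact h
    · exfalso
      obtain ⟨u, rfl⟩ := h
      have hXc : (X i : MvPolynomial (Fin d) ℂ) ∣ c :=
        ⟨(↑u⁻¹ : (MvPolynomial (Fin d) ℂ)ˣ), by rw [he, mul_assoc]; simp⟩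
      have hXp : (X i : MvPolynomial (Fin d) ℂ) ∣ p := hXc.trans hcp
      obtain ⟨s, hs⟩ := hXp
      have h0 : eval (fun _ => (0:ℂ)) p = 0 := by rw [hs]; simp
      exact hstable (fun _ => 0) (fun j => by simp) h0
  have hrel : IsRelPrime p ((∏ i, X i ^ m i) * pr) := by
    refine IsRelPrime.mul_right ?_ ?_
    · exact IsRelPrime.prod_right fun i _ => (hX i).pow_right
    · exact fun c hc1 hc2 => hcoprime c hc1 hc2
  have hdvd : p ∣ ((∏ i, X i ^ m i) * pr) * M.det := ⟨N, by rw [← hid]⟩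
  exact hrel.dvd_of_dvd_mul_left hdvd
end

section
/- Let p and q be coprime polynomials in d variables such that the identity q(z)·conj(q(1/z̄)) = p(z)·conj(p(1/z̄)) holds for all z ∈ 𝕋^d. Then there exists a polynomial u with |u(z)| = 1 for all z ∈ 𝕋^d such that u(z)q(z) = z^τ · conj(p(1/z̄)), where τ is the componentwise maximum of the multidegrees of p and q. -/
open MvPolynomial

lemma vanish_on_prod_infinite : ∀ (d : ℕ) (S : Fin d → Set ℂ) (_ : ∀ i, (S i).Infinite)
    (f : MvPolynomial (Fin d) ℂ) (_ : ∀ z : Fin d → ℂ, (∀ i, z i ∈ S i) → eval z f = 0), f = 0 := by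
  intro d
  induction d with
  | zero =>
    intro S hS f hf
    obtain ⟨a, rfl⟩ := MvPolynomial.C_surjective (Fin 0) f
    have := hf (fun i => i.elim0) (fun i => i.elim0)
    rw [eval_C] at this
    rw [this, map_zero]
  | succ n ih =>
    intro S hS f hf
    have key : ∀ z' : Fin n → ℂ, (∀ i, z' i ∈ S i.succ) →
        Polynomial.map (eval z') (finSuccEquiv ℂ n f) = 0 := by
      intro z' hz'
      apply Polynomial.eq_zero_of_infinite_isRoot
      apply Set.Infinite.mono _ (hS 0)
      intro t ht
      show Polynomial.IsRoot _ t
      rw [Polynomial.IsRoot, ← eval_eq_eval_mv_eval']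
      apply hf
      intro i
      refine Fin.cases ?_ ?_ i
      · exact ht
      · intro j; simpa using hz' j
    have hcoeff : ∀ k, (finSuccEquiv ℂ n f).coeff k = 0 := by
      intro k
      apply ih (fun i => S i.succ) (fun i => hS i.succ)
      intro z' hz'
      have := key z' hz'
      have h2 := congrArg (fun P => Polynomial.coeff P k) this
      simpa using h2
    have : finSuccEquiv ℂ n f = 0 := Polynomial.ext fun k => by simp [hcoeff]
    exact (map_eq_zero_iff _ (AlgEquiv.injective _)).mp this

lemma circle_inter_open_infinite {U : Set ℂ} (hU : IsOpen U) {z0 : ℂ}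
    (hz0 : z0 ∈ U) (habs : ‖z0‖ = 1) :
    (U ∩ {w : ℂ | ‖w‖ = 1}).Infinite := by
  have hz0ne : z0 ≠ 0 := by intro h; rw [h] at habs; simp at habs
  set g : ℝ → ℂ := fun θ => z0 * Complex.exp (θ * Complex.I) with hg
  have hcont : Continuous g := by continuity
  have hg0 : g 0 = z0 := by simp [hg]
  have hmem : ∀ᶠ θ in nhds (0:ℝ), g θ ∈ U := by
    have := hU.mem_nhds (hg0 ▸ hz0)
    exact hcont.continuousAt.preimage_mem_nhds this
  rw [Metric.eventually_nhds_iff] at hmem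
  obtain ⟨δ, hδ, hball⟩ := hmem
  set δ' : ℝ := min δ Real.pi with hδ'
  have hδ'pos : 0 < δ' := lt_min hδ Real.pi_pos
  have hinj : Set.InjOn g (Set.Ioo (-δ') δ') := by
    intro a ha b hb hab
    have : Complex.exp (a * Complex.I) = Complex.exp (b * Complex.I) :=
      mul_left_cancel₀ hz0ne hab
    rw [Complex.exp_eq_exp_iff_exists_int] at this
    obtain ⟨n, hn⟩ := this
    have : (a : ℂ) = b + n * (2 * Real.pi) := by
      have h2 : (a : ℂ) * Complex.I = (b + n * (2*Real.pi)) * Complex.I := by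
        rw [hn]; ring
      exact mul_right_cancel₀ Complex.I_ne_zero h2
    have hre : a = b + n * (2 * Real.pi) := by exact_mod_cast this
    have hn0 : n = 0 := by
      by_contra h
      have h1 : (1:ℝ) ≤ |(n:ℝ)| := by exact_mod_cast Int.one_le_abs (by exact_mod_cast h)
      have heq : |a - b| = |(n:ℝ)| * (2 * Real.pi) := by
        rw [hre, show b + (n:ℝ)*(2*Real.pi) - b = (n:ℝ) * (2*Real.pi) by ring,
          abs_mul, abs_of_pos Real.two_pi_pos]
      have hpi := min_le_right δ Real.pi
      have ha1 := ha.1; have ha2 := ha.2; have hb1 := hb.1; have hb2 := hb.2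
      have hlt : |a - b| < 2 * Real.pi := by
        rw [abs_sub_lt_iff]; constructor <;> linarith
      have h2 : 2 * Real.pi ≤ |(n:ℝ)| * (2 * Real.pi) :=
        le_mul_of_one_le_left (by positivity) h1
      linarith
    rw [hn0] at hre; push_cast at hre; linarith
  have hsub : g '' Set.Ioo (-δ') δ' ⊆ U ∩ {w : ℂ | ‖w‖ = 1} := by
    rintro w ⟨θ, hθ, rfl⟩
    constructor
    · apply hball
      simp only [Real.dist_eq, sub_zero]
      have := abs_lt.mpr ⟨hθ.1, hθ.2⟩
      exact lt_of_lt_of_le this (min_le_left _ _)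
    · show ‖_‖ = 1
      rw [norm_mul, habs, Complex.norm_exp_ofReal_mul_I, one_mul]
  apply Set.Infinite.mono hsub
  apply Set.Infinite.image (hinj)
  exact Set.Ioo_infinite (neg_lt_self hδ'pos)

lemma eval_reflect (d : ℕ) (τ : Fin d →₀ ℕ) (p : MvPolynomial (Fin d) ℂ)
    (hτ : ∀ m ∈ p.support, ∀ i, m i ≤ τ i) (z : Fin d → ℂ) (hz : ∀ i, z i ≠ 0) :
    eval z (p.support.sum fun m => monomial (τ - m) (starRingEnd ℂ (coeff m p))) =
      (∏ i, z i ^ τ i) * starRingEnd ℂ (eval (fun i => ((starRingEnd ℂ) (z i))⁻¹) p) := by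
  have hconj : (starRingEnd ℂ) (eval (fun i => ((starRingEnd ℂ) (z i))⁻¹) p)
      = ∑ m ∈ p.support, (starRingEnd ℂ) (coeff m p) * ∏ i, (z i)⁻¹ ^ m i := by
    rw [eval_eq', map_sum]
    refine Finset.sum_congr rfl fun m hm => ?_
    rw [map_mul, map_prod]
    congr 1
    refine Finset.prod_congr rfl fun i _ => ?_
    rw [map_pow, map_inv₀, Complex.conj_conj]
  rw [hconj, Finset.mul_sum, map_sum]
  refine Finset.sum_congr rfl fun m hm => ?_
  rw [eval_monomial, Finsupp.prod_pow]
  have key : (∏ i, z i ^ (τ - m) i) = (∏ i, z i ^ τ i) * ∏ i, (z i)⁻¹ ^ m i := by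
    rw [← Finset.prod_mul_distrib]
    refine Finset.prod_congr rfl fun i _ => ?_
    rw [Finsupp.tsub_apply, pow_sub₀ _ (hz i) (hτ m hm i), inv_pow]
  rw [key]; ring


/-- If `p` and `q` are coprime and `q(z)·conj(q(1/z̄)) = p(z)·conj(p(1/z̄))` on the torus, then
there is a polynomial `u` unimodular on the torus with `u(z)·q(z) = z^τ · conj (p(1/z̄))`, where
`τ` is the componentwise maximum of the multidegrees of `p` and `q`. -/
theorem exists_unimodular_factor_of_torus_equality (d : ℕ) (p q : MvPolynomial (Fin d) ℂ)
    (hcoprime : ∀ r : MvPolynomial (Fin d) ℂ, r ∣ p → r ∣ q → IsUnit r)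
    (htorus : ∀ z : Fin d → ℂ, (∀ i, ‖z i‖ = 1) →
      eval z q * (starRingEnd ℂ) (eval (fun i => ((starRingEnd ℂ) (z i))⁻¹) q) =
        eval z p * (starRingEnd ℂ) (eval (fun i => ((starRingEnd ℂ) (z i))⁻¹) p)) :
    ∃ u : MvPolynomial (Fin d) ℂ,
      (∀ z : Fin d → ℂ, (∀ i, ‖z i‖ = 1) → ‖eval z u‖ = 1) ∧
      ∀ z : Fin d → ℂ, (∀ i, z i ≠ 0) →
        eval z u * eval z q =
          (∏ i, z i ^ max (p.degreeOf i) (q.degreeOf i)) *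
            (starRingEnd ℂ) (eval (fun i => ((starRingEnd ℂ) (z i))⁻¹) p) := by
  classical
  -- the circle is infinite
  have hcircle : ({w : ℂ | ‖w‖ = 1}).Infinite := by
    have := circle_inter_open_infinite isOpen_univ (Set.mem_univ (1:ℂ)) (by simp)
    simpa using this
  -- torus points have nonzero and "self-inverse-conjugate" coordinates
  have hne : ∀ z : Fin d → ℂ, (∀ i, ‖z i‖ = 1) → ∀ i, z i ≠ 0 := by
    intro z hz i h; have := hz i; rw [h] at this; simp at this
  have htz : ∀ z : Fin d → ℂ, (∀ i, ‖z i‖ = 1) →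
      (fun i => ((starRingEnd ℂ) (z i))⁻¹) = z := by
    intro z hz; funext i
    have h1 : z i * (starRingEnd ℂ) (z i) = 1 := by
      rw [Complex.mul_conj, Complex.normSq_eq_norm_sq, hz i]; norm_num
    exact inv_eq_of_mul_eq_one_left h1
  -- the componentwise max degree
  set τ : Fin d →₀ ℕ :=
    Finsupp.equivFunOnFinite.symm (fun i => max (p.degreeOf i) (q.degreeOf i)) with hτdef
  have hτ_apply : ∀ i, τ i = max (p.degreeOf i) (q.degreeOf i) := fun i => rfl
  have hτp : ∀ m ∈ p.support, ∀ i, m i ≤ τ i := by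
    intro m hm i
    have : m i ≤ p.degreeOf i := degreeOf_le_iff.mp le_rfl m hm
    exact this.trans ((le_max_left _ _).trans (hτ_apply i).ge)
  have hτq : ∀ m ∈ q.support, ∀ i, m i ≤ τ i := by
    intro m hm i
    have : m i ≤ q.degreeOf i := degreeOf_le_iff.mp le_rfl m hm
    exact this.trans ((le_max_right _ _).trans (hτ_apply i).ge)
  set P : MvPolynomial (Fin d) ℂ :=
    p.support.sum fun m => monomial (τ - m) (starRingEnd ℂ (coeff m p)) with hPdef
  set Q : MvPolynomial (Fin d) ℂ :=
    q.support.sum fun m => monomial (τ - m) (starRingEnd ℂ (coeff m q)) with hQdef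
  -- polynomial identity q * Q = p * P
  have hident : q * Q = p * P := by
    have h0 : q * Q - p * P = 0 := by
      apply vanish_on_prod_infinite d (fun _ => {w : ℂ | ‖w‖ = 1})
        (fun _ => hcircle)
      intro z hz
      have hz' : ∀ i, ‖z i‖ = 1 := hz
      rw [map_sub, map_mul, map_mul, eval_reflect d τ p hτp z (hne z hz'),
        eval_reflect d τ q hτq z (hne z hz')]
      have := htorus z hz'
      rw [sub_eq_zero, mul_left_comm (eval z q), mul_left_comm (eval z p), this]
    exact sub_eq_zero.mp h0
  -- |p| = |q| on the torus
  have habs_eq : ∀ z : Fin d → ℂ, (∀ i, ‖z i‖ = 1) →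
      ‖eval z p‖ = ‖eval z q‖ := by
    intro z hz
    have h := htorus z hz
    rw [htz z hz] at h
    have h2 := congrArg (‖·‖) h
    rw [norm_mul, norm_mul, Complex.norm_conj, Complex.norm_conj] at h2
    nlinarith [norm_nonneg (eval z p), norm_nonneg (eval z q)]
  -- q is nonzero
  have hq0 : q ≠ 0 := by
    intro h
    have hp0 : p = 0 := by
      apply vanish_on_prod_infinite d (fun _ => {w : ℂ | ‖w‖ = 1})
        (fun _ => hcircle)
      intro z hz
      have := habs_eq z hz
      rw [h, map_zero, norm_zero] at this
      exact norm_eq_zero.mp this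
    have : IsUnit (0 : MvPolynomial (Fin d) ℂ) :=
      hcoprime 0 (by simp [hp0]) (by simp [h])
    exact not_isUnit_zero this
  -- q divides P
  have hrel : IsRelPrime q p := fun r hrq hrp => hcoprime r hrp hrq
  have hdvd : q ∣ P := by
    refine hrel.dvd_of_dvd_mul_left ⟨Q, hident.symm⟩
  obtain ⟨u, hu⟩ := hdvd
  refine ⟨u, ?_, ?_⟩
  · -- unimodularity on the torus
    intro z hz
    -- on the dense subset where q does not vanish
    have hD : ∀ w : Fin d → ℂ, (∀ i, ‖w i‖ = 1) → eval w q ≠ 0 →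
        ‖eval w u‖ = 1 := by
      intro w hw hwq
      have h1 : eval w P = eval w q * eval w u := by rw [hu, map_mul]
      have h2 : eval w P =
          (∏ i, w i ^ τ i) * (starRingEnd ℂ) (eval (fun i => ((starRingEnd ℂ) (w i))⁻¹) p) :=
        eval_reflect d τ p hτp w (hne w hw)
      rw [htz w hw] at h2
      have h3 := congrArg (‖·‖) (h1.symm.trans h2)
      rw [norm_mul, norm_mul, Complex.norm_conj, norm_prod] at h3
      have h4 : (∏ i, ‖w i ^ τ i‖) = 1 := by
        refine Finset.prod_eq_one fun i _ => ?_
        rw [norm_pow, hw i, one_pow]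
      rw [h4, one_mul, habs_eq w hw] at h3
      have h5 : ‖eval w q‖ ≠ 0 := norm_ne_zero_iff.mpr hwq
      exact mul_left_cancel₀ h5 (h3.trans (mul_one (‖eval w q‖)).symm)
    -- density of that subset in the torus
    have hclos : z ∈ closure {w : Fin d → ℂ | (∀ i, ‖w i‖ = 1) ∧ eval w q ≠ 0} := by
      rw [mem_closure_iff]
      intro O hO hzO
      by_contra hempty
      rw [Set.not_nonempty_iff_eq_empty] at hempty
      have hvan : ∀ w ∈ O, (∀ i, ‖w i‖ = 1) → eval w q = 0 := by
        intro w hwO hwt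
        by_contra hwq
        have hmem : w ∈ O ∩ {w | (∀ i, ‖w i‖ = 1) ∧ eval w q ≠ 0} :=
          ⟨hwO, hwt, hwq⟩
        rw [hempty] at hmem
        exact hmem
      obtain ⟨I, U, hUspec, hsub⟩ := isOpen_pi_iff.mp hO z hzO
      set V : Fin d → Set ℂ := fun i => if i ∈ I then U i else Set.univ with hV
      have hVopen : ∀ i, IsOpen (V i) := by
        intro i; rw [hV]; dsimp only
        split
        · exact (hUspec i ‹_›).1
        · exact isOpen_univ
      have hzV : ∀ i, z i ∈ V i := by
        intro i; rw [hV]; dsimp only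
        split
        · exact (hUspec i ‹_›).2
        · trivial
      apply hq0
      apply vanish_on_prod_infinite d (fun i => V i ∩ {w : ℂ | ‖w‖ = 1})
        (fun i => circle_inter_open_infinite (hVopen i) (hzV i) (hz i))
      intro w hw
      have hwt : ∀ i, ‖w i‖ = 1 := fun i => (hw i).2
      have hwO : w ∈ O := by
        apply hsub
        intro i hi
        have hi' : i ∈ I := hi
        have hmem : w i ∈ (if i ∈ I then U i else Set.univ) := (hw i).1
        rwa [if_pos hi'] at hmem
      exact hvan w hwO hwt
    -- conclude by continuity
    have hcont : Continuous fun w : Fin d → ℂ => ‖eval w u‖ :=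
      continuous_norm.comp (MvPolynomial.continuous_eval u)
    have hclosed : IsClosed {w : Fin d → ℂ | ‖eval w u‖ = 1} :=
      isClosed_eq hcont continuous_const
    have hsub2 : {w : Fin d → ℂ | (∀ i, ‖w i‖ = 1) ∧ eval w q ≠ 0} ⊆
        {w : Fin d → ℂ | ‖eval w u‖ = 1} := fun w hw => hD w hw.1 hw.2
    exact (closure_minimal hsub2 hclosed) hclos
  · -- the evaluation identity
    intro z hz
    have h1 : eval z P = eval z q * eval z u := by rw [hu, map_mul]
    have h2 : eval z P =
        (∏ i, z i ^ τ i) * (starRingEnd ℂ) (eval (fun i => ((starRingEnd ℂ) (z i))⁻¹) p) :=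
      eval_reflect d τ p hτp z hz
    have h3 : (∏ i, z i ^ τ i) = ∏ i, z i ^ max (p.degreeOf i) (q.degreeOf i) :=
      Finset.prod_congr rfl fun i _ => by rw [hτ_apply i]
    rw [mul_comm (eval z u), ← h1, h2, h3]
end
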